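/- arXiv:1309.6579 — 6 statements merged into one kernel-verified Lean document; each statement's English description precedes it below -/
import Mathlib

section
/- Let ~ be a homogeneous equivalence relation on a homogeneous space X for a right G-action. Then ~ is regular if and only if for each x ∈ X, the stabilizer Stab_G(x) is a normal subgroup of N_G([x]) := {g ∈ G : x·g ~ x}. -/
/-- A homogeneous equivalence relation on a homogeneous `G`-space is regular
(equivalent points have equal stabilizers) if and only if each stabilizer
`Stab_G(x)` is normal in `N_G([x]) = {g : x·g ~ x}` (closed under conjugation
by elements of `N_G([x])`). -/
theorem regular_iff_stab_normal_in_class_stabilizer {X : Type*} {G : Type*} [Group G]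
    (act : X → G → X)
    (hact_one : ∀ x, act x 1 = x)
    (hact_mul : ∀ x g h, act (act x g) h = act x (g * h))
    (htrans : ∀ x y : X, ∃ g : G, act x g = y)
    (r : X → X → Prop)
    (hequiv : Equivalence r)
    (hhomog : ∀ x y (g : G), r x y → r (act x g) (act y g)) :
    (∀ x y, r x y → {g : G | act x g = x} = {g : G | act y g = y}) ↔
    (∀ x : X, ∀ h : G, r (act x h) x → ∀ g : G, act x g = x →
      act x (h⁻¹ * g * h) = x) := by
  -- key cancellation: act x u = x ↔ act x (u*v) = act x v
  have cancel : ∀ (x : X) (u v : G), act x (u * v) = act x v → act x u = x := by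
    intro x u v h
    have := congrArg (fun z => act z v⁻¹) h
    simp only [hact_mul] at this
    simpa [mul_assoc, hact_one] using this
  constructor
  · intro hreg x h hr g hg
    -- y = act x h, r y x, so stab y = stab x
    have hs := hreg _ _ hr
    -- h⁻¹ * g * h stabilizes act x h
    have : act (act x h) (h⁻¹ * g * h) = act x h := by
      rw [hact_mul]
      have : h * (h⁻¹ * g * h) = g * h := by group
      rw [this, ← hact_mul, hg]
    exact (Set.ext_iff.mp hs _).mp this
  · intro hN x y hr
    obtain ⟨g₀, hg₀⟩ := htrans x y
    have hrX : r (act x g₀) x := hg₀ ▸ hequiv.symm hr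
    have hrXinv : r (act x g₀⁻¹) x := by
      have := hhomog _ _ g₀⁻¹ hrX
      rw [hact_mul, mul_inv_cancel, hact_one] at this
      exact hequiv.symm this
    ext g
    simp only [Set.mem_setOf_eq]
    constructor
    · intro hg
      -- act y g = act x (g₀ g); show equals act x g₀ = y
      have key : act x (g₀ * g * g₀⁻¹) = x := by
        have := hN x g₀⁻¹ hrXinv g hg
        simpa using this
      rw [← hg₀, hact_mul]
      have : g₀ * g = (g₀ * g * g₀⁻¹) * g₀ := by group
      rw [this, ← hact_mul, key]
    · intro hg
      -- act y g = y means act x (g₀ g) = act x g₀, so g₀ g g₀⁻¹ ∈ stab x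
      have key : act x (g₀ * g * g₀⁻¹) = x := by
        apply cancel x _ g₀
        have : g₀ * g * g₀⁻¹ * g₀ = g₀ * g := by group
        rw [this, ← hact_mul, hg₀, hg]
      have := hN x g₀ hrX _ key
      simpa [mul_assoc] using this
end

section
/- Let ~ be a regular equivalence relation on a homogeneous space X for a right G-action, let x ∈ X, and let g ∈ N_G([x]) (i.e., x·g ~ x). Then the map w_g^x : X → X defined on each element x·h by x·h ↦ x·gh is well-defined, bijective, commutes with the G-action, and preserves every equivalence class of ~. -/
/-- A permutation of `X` commutes with the right `G`-action `act`. -/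
def IsEquivariant {X G : Type*} (act : X → G → X) (φ : Equiv.Perm X) : Prop :=
  ∀ x g, φ (act x g) = act (φ x) g

/-- For a regular equivalence relation `r` on a homogeneous `G`-space `X`,
`x ∈ X` and `g ∈ N_G([x])` (i.e. `x·g ~ x`), the assignment `x·h ↦ x·(gh)` is
well defined, and extends to a bijection of `X` commuting with the `G`-action
and preserving every equivalence class. -/
theorem class_stabilizer_element_gives_automorphism {X : Type*} {G : Type*} [Group G]
    (act : X → G → X)
    (hact_one : ∀ x, act x 1 = x)
    (hact_mul : ∀ x g h, act (act x g) h = act x (g * h))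
    (htrans : ∀ x y : X, ∃ g : G, act x g = y)
    (r : X → X → Prop)
    (hequiv : Equivalence r)
    (hhomog : ∀ x y (g : G), r x y → r (act x g) (act y g))
    (hreg : ∀ x y, r x y → {g : G | act x g = x} = {g : G | act y g = y})
    (x : X) (g : G) (hg : r (act x g) x) :
    (∀ h k : G, act x h = act x k → act x (g * h) = act x (g * k)) ∧
    (∃ φ : Equiv.Perm X,
      (∀ h : G, φ (act x h) = act x (g * h)) ∧
      IsEquivariant act φ ∧
      (∀ y : X, r (φ y) y)) := by
  -- well-definedness for any g' with r (act x g') x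
  have wd : ∀ g' : G, r (act x g') x → ∀ h k : G, act x h = act x k →
      act x (g' * h) = act x (g' * k) := by
    intro g' hg' h k hhk
    have hstab : {a : G | act (act x g') a = act x g'} = {a : G | act x a = x} :=
      hreg _ _ hg'
    have hmem : act x (h * k⁻¹) = x := by
      have : act (act x h) k⁻¹ = act (act x k) k⁻¹ := by rw [hhk]
      rwa [hact_mul, hact_mul, mul_inv_cancel, hact_one] at this
    have hmem' : act (act x g') (h * k⁻¹) = act x g' := by
      have hm : (h * k⁻¹) ∈ {a : G | act x a = x} := hmem
      rw [← hstab] at hm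
      exact hm
    have : act (act x g') h = act (act x g') k := by
      have := congrArg (fun z => act z k) hmem'
      simpa [hact_mul, mul_assoc] using this
    simpa [hact_mul] using this
  have hginv : r (act x g⁻¹) x := by
    have := hhomog _ _ g⁻¹ hg
    rw [hact_mul, mul_inv_cancel, hact_one] at this
    exact hequiv.symm this
  -- the forward map
  let c : X → G := fun y => Classical.choose (htrans x y)
  have hc : ∀ y, act x (c y) = y := fun y => Classical.choose_spec (htrans x y)
  let f : X → X := fun y => act x (g * c y)
  have hf : ∀ h : G, f (act x h) = act x (g * h) := by
    intro h
    exact wd g hg _ _ (hc (act x h))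
  have hfinj : Function.Injective f := by
    intro y z hyz
    have : act x (g⁻¹ * (g * c y)) = act x (g⁻¹ * (g * c z)) := wd g⁻¹ hginv _ _ hyz
    rw [← mul_assoc, ← mul_assoc, inv_mul_cancel, one_mul, one_mul, hc, hc] at this
    exact this
  have hfsurj : Function.Surjective f := by
    intro z
    refine ⟨act x (g⁻¹ * c z), ?_⟩
    have := hf (g⁻¹ * c z)
    rw [← mul_assoc, mul_inv_cancel, one_mul, hc] at this
    exact this
  refine ⟨fun h k => wd g hg h k, ?_⟩
  refine ⟨Equiv.ofBijective f ⟨hfinj, hfsurj⟩, hf, ?_, ?_⟩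
  · intro y k
    show f (act y k) = act (f y) k
    have h1 : act x (c (act y k)) = act x (c y * k) := by
      rw [hc, ← hact_mul, hc]
    have h2 : act x (g * c (act y k)) = act x (g * (c y * k)) := wd g hg _ _ h1
    show act x (g * c (act y k)) = act (act x (g * c y)) k
    rw [h2, hact_mul, mul_assoc]
  · intro y
    show r (f y) y
    have : r (act (act x g) (c y)) (act x (c y)) := hhomog _ _ _ hg
    rw [hact_mul, hc] at this
    exact this
end

section
/- An equivalence relation ~ on a homogeneous space X for a right G-action is regular if and only if there exists a subgroup W of Aut_G(X) such that the equivalence classes of ~ are exactly the W-orbits in X. -/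
/-- An equivalence relation on a homogeneous `G`-space `X` is regular
(homogeneous with equivalent points having equal stabilizers) if and only if
its classes are the orbits of a subgroup `W` of `Aut_G(X)`. -/
theorem regular_iff_orbits_of_subgroup {X : Type*} {G : Type*} [Group G]
    (act : X → G → X)
    (hact_one : ∀ x, act x 1 = x)
    (hact_mul : ∀ x g h, act (act x g) h = act x (g * h))
    (htrans : ∀ x y : X, ∃ g : G, act x g = y)
    (r : X → X → Prop)
    (hequiv : Equivalence r) :
    ((∀ x y (g : G), r x y → r (act x g) (act y g)) ∧
      (∀ x y, r x y → {g : G | act x g = x} = {g : G | act y g = y})) ↔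
    (∃ W : Subgroup (Equiv.Perm X),
      (∀ w ∈ W, IsEquivariant act w) ∧
      (∀ x y, r x y ↔ ∃ w ∈ W, (w : Equiv.Perm X) x = y)) := by
  classical
  constructor
  · rintro ⟨hhom, hstab⟩
    have wd : ∀ a b : X, r a b → ∀ g g' : G, act a g = act a g' → act b g = act b g' := by
      intro a b hab g g' h
      have hs := hstab a b hab
      have h1 : act a (g * g'⁻¹) = a := by
        rw [← hact_mul, h, hact_mul, mul_inv_cancel, hact_one]
      have h2 : act b (g * g'⁻¹) = b := (Set.ext_iff.mp hs (g * g'⁻¹)).mp h1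
      calc act b g = act (act b (g * g'⁻¹)) g' := by
            rw [hact_mul, inv_mul_cancel_right]
        _ = act b g' := by rw [h2]
    refine ⟨{ carrier := {φ : Equiv.Perm X | IsEquivariant act φ ∧ ∀ z, r z (φ z)}
              one_mem' := ⟨fun _ _ => rfl, fun z => hequiv.refl z⟩
              mul_mem' := ?_
              inv_mem' := ?_ }, fun w hw => hw.1, ?_⟩
    · rintro φ ψ ⟨hφe, hφr⟩ ⟨hψe, hψr⟩
      refine ⟨fun z g => ?_, fun z => hequiv.trans (hψr z) (hφr (ψ z))⟩
      show φ (ψ (act z g)) = act (φ (ψ z)) g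
      rw [hψe, hφe]
    · rintro φ ⟨hφe, hφr⟩
      have hinv : IsEquivariant act φ⁻¹ := by
        intro z g
        have : (φ⁻¹ : Equiv.Perm X) (act ((φ : Equiv.Perm X) ((φ⁻¹ : Equiv.Perm X) z)) g)
            = act ((φ⁻¹ : Equiv.Perm X) z) g := by
          rw [← hφe]; exact φ.symm_apply_apply _
        simpa [Equiv.Perm.coe_inv, Equiv.apply_symm_apply] using this
      refine ⟨hinv, fun z => ?_⟩
      have := hφr ((φ⁻¹ : Equiv.Perm X) z)
      rw [Equiv.Perm.coe_inv, Equiv.apply_symm_apply] at this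
      exact hequiv.symm this
    · intro x y
      constructor
      · intro hxy
        -- construct the equivariant bijection sending x to y
        set gx : X → G := fun z => (htrans x z).choose with hgx_def
        have hgx : ∀ z, act x (gx z) = z := fun z => (htrans x z).choose_spec
        set gy : X → G := fun z => (htrans y z).choose with hgy_def
        have hgy : ∀ z, act y (gy z) = z := fun z => (htrans y z).choose_spec
        have hyx := hequiv.symm hxy
        have hli : Function.LeftInverse (fun z => act x (gy z)) (fun z => act y (gx z)) := by
          intro z
          have : act y (gy (act y (gx z))) = act y (gx z) := hgy _
          have h2 := wd y x hyx _ _ this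
          rw [hgx] at h2
          exact h2
        have hri : Function.RightInverse (fun z => act x (gy z)) (fun z => act y (gx z)) := by
          intro z
          have : act x (gx (act x (gy z))) = act x (gy z) := hgx _
          have h2 := wd x y hxy _ _ this
          rw [hgy] at h2
          exact h2
        set φ : Equiv.Perm X := ⟨fun z => act y (gx z), fun z => act x (gy z), hli, hri⟩
          with hφdef
        have hmem : φ ∈ ({ψ : Equiv.Perm X | IsEquivariant act ψ ∧ ∀ z, r z (ψ z)} : Set _) := by
          constructor
          · intro z k
            show act y (gx (act z k)) = act (act y (gx z)) k
            have h1 : act x (gx (act z k)) = act x (gx z * k) := by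
              rw [← hact_mul, hgx, hgx]
            have h2 := wd x y hxy _ _ h1
            rw [h2, ← hact_mul]
          · intro z
            have := hhom x y (gx z) hxy
            rwa [hgx] at this
        refine ⟨φ, hmem, ?_⟩
        show act y (gx x) = y
        have h1 : act x (gx x) = act x 1 := by rw [hgx, hact_one]
        have h2 := wd x y hxy _ _ h1
        rw [h2, hact_one]
      · rintro ⟨w, hw, hwx⟩
        have := hw.2 x
        rwa [hwx] at this
  · rintro ⟨W, hWe, hWorb⟩
    constructor
    · intro x y g hxy
      obtain ⟨w, hw, hwx⟩ := (hWorb x y).mp hxy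
      refine (hWorb _ _).mpr ⟨w, hw, ?_⟩
      rw [hWe w hw x g, hwx]
    · intro x y hxy
      obtain ⟨w, hw, hwx⟩ := (hWorb x y).mp hxy
      ext g
      simp only [Set.mem_setOf_eq]
      constructor
      · intro h
        have h3 := hWe w hw x g
        rw [h, hwx] at h3
        exact h3.symm
      · intro h
        have hx : (w⁻¹ : Equiv.Perm X) y = x := by rw [← hwx]; exact w.symm_apply_apply x
        have h3 := hWe w⁻¹ (inv_mem hw) y g
        rw [h, hx] at h3
        exact h3.symm
end

section
/- Let X be a homogeneous space for a right G-action and W ≤ Aut_G(X). Then every bijection φ: [x] → [y] between W-orbits that commutes with the W-action is of the form φ_g^x: w·x ↦ (w·x)·g for some g ∈ G with x·g ∈ [y]. -/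
/-- Every bijection between two `W`-orbits on a homogeneous `G`-space which
commutes with the `W`-action is given by the right action of some `g ∈ G`. -/
theorem orbit_bijection_is_right_translation {X : Type*} {G : Type*} [Group G]
    (act : X → G → X)
    (hact_one : ∀ x, act x 1 = x)
    (hact_mul : ∀ x g h, act (act x g) h = act x (g * h))
    (htrans : ∀ x y : X, ∃ g : G, act x g = y)
    (W : Subgroup (Equiv.Perm X))
    (hW : ∀ w ∈ W, IsEquivariant act w)
    (x y : X) (φ : X → X)
    (hmaps : ∀ z ∈ {z | ∃ w ∈ W, (w : Equiv.Perm X) x = z},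
      φ z ∈ {z | ∃ w ∈ W, (w : Equiv.Perm X) y = z})
    (hbij : Set.BijOn φ {z | ∃ w ∈ W, (w : Equiv.Perm X) x = z}
      {z | ∃ w ∈ W, (w : Equiv.Perm X) y = z})
    (hcomm : ∀ w ∈ W, ∀ z ∈ {z | ∃ w ∈ W, (w : Equiv.Perm X) x = z},
      φ ((w : Equiv.Perm X) z) = (w : Equiv.Perm X) (φ z)) :
    ∃ g : G, act x g ∈ {z | ∃ w ∈ W, (w : Equiv.Perm X) y = z} ∧
      ∀ z ∈ {z | ∃ w ∈ W, (w : Equiv.Perm X) x = z}, φ z = act z g := by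
  obtain ⟨g, hg⟩ := htrans x (φ x)
  have hx : x ∈ {z | ∃ w ∈ W, (w : Equiv.Perm X) x = z} :=
    ⟨1, W.one_mem, rfl⟩
  refine ⟨g, by rw [hg]; exact hmaps x hx, ?_⟩
  rintro z ⟨w, hwW, rfl⟩
  rw [hcomm w hwW x hx, ← hg, ← hW w hwW x g, hg]
end

section
/- Let X be a homogeneous space for a right G-action and W ≤ Aut_G(X). Define the groupoid N_G^W with objects the W-orbits and morphisms N_G^W([x],[y]) = {g ∈ G : x·g ∈ [y]}, composed by multiplication in G, and define the orbit groupoid W\X with objects the W-orbits and morphisms the W-equivariant bijections between orbits. Then the collection Stab_G of subgroups Stab_G(x) ≤ N_G^W([x],[x]) is a normal subgroup of the groupoid N_G^W, and W\X is isomorphic to the quotient groupoid N_G^W/Stab_G. -/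
/-- The `W`-orbit of `x` for a subgroup `W` of permutations of `X`. -/
def WOrbit {X : Type*} (W : Subgroup (Equiv.Perm X)) (x : X) : Set X :=
  {z | ∃ w ∈ W, (w : Equiv.Perm X) x = z}

/-- Let `X` be a homogeneous space for a right `G`-action and `W ≤ Aut_G(X)`.
In the groupoid `N_G^W` (objects the `W`-orbits, morphisms `[x] → [y]` the
elements `g ∈ G` with `x·g ∈ [y]`), the stabilizers `Stab_G(x)` form a normal
subgroup, and the quotient groupoid `N_G^W/Stab_G` is isomorphic to the orbit
groupoid `W\X` whose morphisms are the `W`-equivariant bijections between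
orbits.  Concretely: (1) conjugating a stabilizer along a morphism lands in a
stabilizer (normality); (2) every `W`-equivariant bijection of orbits is right
translation by some morphism `g` (the comparison functor is full, hence with
(3) an isomorphism on morphisms); (3) two morphisms `g, h : [x] → [y]` induce
the same map on orbits iff they agree modulo `Stab_G(x)`. -/
theorem orbit_groupoid_iso_stabilizer_quotient {X : Type*} {G : Type*} [Group G]
    (act : X → G → X)
    (hact_one : ∀ x, act x 1 = x)
    (hact_mul : ∀ x g h, act (act x g) h = act x (g * h))
    (htrans : ∀ x y : X, ∃ g : G, act x g = y)
    (W : Subgroup (Equiv.Perm X))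
    (hW : ∀ w ∈ W, IsEquivariant act w) :
    -- (1) normality of the stabilizers in the groupoid `N_G^W`
    (∀ (x y : X) (g : G), act x g ∈ WOrbit W y →
      ∀ s : G, act y s = y → act x (g * s * g⁻¹) = x) ∧
    -- (2) every `W`-equivariant bijection of orbits is induced by a morphism
    (∀ (x y : X) (φ : X → X),
      Set.BijOn φ (WOrbit W x) (WOrbit W y) →
      (∀ w ∈ W, ∀ z ∈ WOrbit W x, φ ((w : Equiv.Perm X) z) = (w : Equiv.Perm X) (φ z)) →
      ∃ g : G, act x g ∈ WOrbit W y ∧ ∀ z ∈ WOrbit W x, φ z = act z g) ∧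
    -- (3) two morphisms induce the same bijection iff they differ by a stabilizer
    (∀ (x y : X) (g h : G), act x g ∈ WOrbit W y → act x h ∈ WOrbit W y →
      ((∀ z ∈ WOrbit W x, act z g = act z h) ↔ act x (g * h⁻¹) = x)) := by

  refine ⟨?_, ?_, ?_⟩
  · rintro x y g ⟨w, hw, hwy⟩ s hs
    have h1 : act x (g * s) = act x g := by
      rw [← hact_mul, ← hwy, ← (hW w hw) y s, hs]
    calc act x (g * s * g⁻¹) = act (act x (g * s)) g⁻¹ := by rw [hact_mul]
      _ = act (act x g) g⁻¹ := by rw [h1]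
      _ = x := by rw [hact_mul, mul_inv_cancel, hact_one]
  · intro x y φ hbij hequiv
    have hx : x ∈ WOrbit W x := ⟨1, W.one_mem, rfl⟩
    obtain ⟨g, hg⟩ := htrans x (φ x)
    refine ⟨g, by rw [hg]; exact hbij.mapsTo hx, ?_⟩
    rintro z ⟨w, hw, rfl⟩
    rw [hequiv w hw x hx, ← hg, (hW w hw) x g]
  · intro x y g h _ _
    constructor
    · intro hall
      have := hall x ⟨1, W.one_mem, rfl⟩
      rw [← hact_mul, this, hact_mul, mul_inv_cancel, hact_one]
    · rintro hst z ⟨w, hw, rfl⟩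
      have hxg : act x g = act x h := by
        have : act (act x (g * h⁻¹)) h = act x h := by rw [hst]
        rwa [hact_mul, mul_assoc, inv_mul_cancel, mul_one] at this
      rw [← (hW w hw) x g, ← (hW w hw) x h, hxg]
end

section
/- In the mutation class of labelled seeds of rank 2 of type A₂ (initial seed the quiver 1 → 2 with cluster (x,y) in ℂ(x,y)), the orbit of the initial labelled seed under the mutation group M₂ has exactly 10 elements, the element (μ₁μ₂)⁵ of M₂ fixes every labelled seed in the orbit, and the transposition (1 2) acts on the orbit in the same way as μ₁μ₂μ₁μ₂μ₁. -/
noncomputable section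

/-- The field `ℂ(x,y)`. -/
abbrev K2 : Type := FractionRing (MvPolynomial (Fin 2) ℂ)

/-- The generators `x, y` of `ℂ(x,y)`. -/
def Xv (i : Fin 2) : K2 :=
  algebraMap (MvPolynomial (Fin 2) ℂ) K2 (MvPolynomial.X i)

/-- A labelled seed of rank 2: an integer `b` recording the quiver (`b` arrows
from vertex `0` to vertex `1` when `b ≥ 0`, and `-b` arrows from `1` to `0`
otherwise) together with the labelled cluster `β : Fin 2 → K2`. -/
abbrev Seed2 : Type := ℤ × (Fin 2 → K2)

/-- Mutation of a rank 2 labelled seed at vertex `i`. -/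
def mutate (i : Fin 2) (s : Seed2) : Seed2 :=
  let b := s.1
  let β := s.2
  let j : Fin 2 := if i = 0 then 1 else 0
  let ain : ℕ := ((if i = 1 then b else -b)).toNat   -- arrows `j → i`
  let aout : ℕ := ((if i = 1 then -b else b)).toNat  -- arrows `i → j`
  (-b, fun k => if k = i then (β j ^ ain + β j ^ aout) / β i else β k)

/-- Relabelling a rank 2 seed by the transposition `(1 2)`. -/
def swapSeed (s : Seed2) : Seed2 :=
  (-s.1, fun k => s.2 (Equiv.swap (0 : Fin 2) 1 k))

/-- Generators of the mutation group `M₂` acting on rank 2 labelled seeds. -/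
inductive Move : Type
  | m1 : Move   -- the mutation `μ₁` (at vertex `0`)
  | m2 : Move   -- the mutation `μ₂` (at vertex `1`)
  | swap : Move -- the transposition `(1 2)`

/-- Applying one generator of `M₂` to a seed (acting on the right). -/
def applyMove (s : Seed2) : Move → Seed2
  | Move.m1 => mutate 0 s
  | Move.m2 => mutate 1 s
  | Move.swap => swapSeed s

/-- Applying a word in the generators of `M₂` to a seed, left to right
(so `applyWord s [g₁, g₂] = (s·g₁)·g₂`). -/
def applyWord (s : Seed2) (w : List Move) : Seed2 :=
  w.foldl applyMove s

/-- The initial labelled seed of type `A₂`: the quiver `1 → 2` with cluster `(x, y)`. -/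
def initialSeed : Seed2 := (1, fun i => Xv i)

/-- The mutation class (the `M₂`-orbit) of the initial seed. -/
def orbitA2 : Set Seed2 := {t | ∃ w : List Move, applyWord initialSeed w = t}


set_option maxHeartbeats 1000000
set_option synthInstance.maxHeartbeats 400000

open MvPolynomial
abbrev R2 := MvPolynomial (Fin 2) ℂ
instance : Field K2 := inferInstance
lemma f_inj : Function.Injective (algebraMap R2 K2) := IsFractionRing.injective R2 K2
lemma lift_ne (p q : R2) (v : Fin 2 → ℂ) (h : eval v p ≠ eval v q) :
    algebraMap R2 K2 p ≠ algebraMap R2 K2 q := fun e => h (by rw [f_inj e])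
lemma lift_ne0 (p : R2) (v : Fin 2 → ℂ) (h : eval v p ≠ 0) :
    algebraMap R2 K2 p ≠ 0 := by
  simpa using lift_ne p 0 v (by simpa using h)

def u1 : K2 := Xv 0
def u2 : K2 := Xv 1
def u3 : K2 := (1 + u2) / u1
def u4 : K2 := (1 + u1 + u2) / (u1 * u2)
def u5 : K2 := (1 + u1) / u2

lemma u1_def : u1 = algebraMap R2 K2 (X 0) := rfl
lemma u2_def : u2 = algebraMap R2 K2 (X 1) := rfl

lemma xne : u1 ≠ 0 := lift_ne0 (X 0) ![1,1] (by simp)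
lemma yne : u2 ≠ 0 := lift_ne0 (X 1) ![1,1] (by simp)
lemma oxne : 1 + u1 ≠ 0 := by
  have := lift_ne0 (1 + X 0) ![1,1] (by norm_num)
  simpa [u1_def, map_add, map_one] using this
lemma oyne : 1 + u2 ≠ 0 := by
  have := lift_ne0 (1 + X 1) ![1,1] (by norm_num)
  simpa [u2_def, map_add, map_one] using this
lemma oxyne : 1 + u1 + u2 ≠ 0 := by
  have := lift_ne0 (1 + X 0 + X 1) ![1,1] (by norm_num)
  simpa [u1_def, u2_def, map_add, map_one] using this
lemma u3ne : u3 ≠ 0 := div_ne_zero oyne xne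
lemma u4ne : u4 ≠ 0 := div_ne_zero oxyne (mul_ne_zero xne yne)
lemma u5ne : u5 ≠ 0 := div_ne_zero oxne yne


lemma idA : (1 + u3) / u2 = u4 := by
  rw [u3, u4]; field_simp [xne, yne]; ring
lemma idB : (1 + u4) / u3 = u5 := by
  rw [u3, u4, u5]; field_simp [xne, yne, oyne]; ring
lemma idC : (1 + u5) / u4 = u1 := by
  rw [u4, u5]; field_simp [xne, yne, oxyne]; ring
lemma idD : (1 + u1) / u5 = u2 := by
  rw [u5]; field_simp [yne, oxne]
lemma idE : (1 + u2) / u3 = u1 := by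
  rw [u3]; field_simp [xne, oyne]
lemma idF : (1 + u3) / u4 = u2 := by
  rw [u3, u4]; field_simp [xne, yne, oxyne]; ring
lemma idG : (1 + u4) / u5 = u3 := by
  rw [u3, u4, u5]; field_simp [xne, yne, oxne]; ring
lemma idH : (1 + u5) / u1 = u4 := by
  rw [u4, u5]; field_simp [xne, yne]; ring

lemma n12 : u1 ≠ u2 := lift_ne (X 0) (X 1) ![0,1] (by simp)
lemma n13 : u1 ≠ u3 := by
  intro h
  rw [u3, eq_div_iff xne] at h
  exact lift_ne (X 0 * X 0) (1 + X 1) ![0,2] (by simp; try norm_num)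
    (by simpa only [map_mul, map_add, map_one, ← u1_def, ← u2_def] using h)
lemma n14 : u1 ≠ u4 := by
  intro h
  rw [u4, eq_div_iff (mul_ne_zero xne yne)] at h
  exact lift_ne (X 0 * (X 0 * X 1)) (1 + X 0 + X 1) ![1,1] (by simp; try norm_num)
    (by simpa only [map_mul, map_add, map_one, ← u1_def, ← u2_def] using h)
lemma n15 : u1 ≠ u5 := by
  intro h
  rw [u5, eq_div_iff yne] at h
  exact lift_ne (X 0 * X 1) (1 + X 0) ![1,1] (by simp; try norm_num)
    (by simpa only [map_mul, map_add, map_one, ← u1_def, ← u2_def] using h)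
lemma n23 : u2 ≠ u3 := by
  intro h
  rw [u3, eq_div_iff xne] at h
  exact lift_ne (X 1 * X 0) (1 + X 1) ![1,0] (by simp)
    (by simpa only [map_mul, map_add, map_one, ← u1_def, ← u2_def] using h)
lemma n24 : u2 ≠ u4 := by
  intro h
  rw [u4, eq_div_iff (mul_ne_zero xne yne)] at h
  exact lift_ne (X 1 * (X 0 * X 1)) (1 + X 0 + X 1) ![1,1] (by simp; try norm_num)
    (by simpa only [map_mul, map_add, map_one, ← u1_def, ← u2_def] using h)
lemma n25 : u2 ≠ u5 := by
  intro h
  rw [u5, eq_div_iff yne] at h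
  exact lift_ne (X 1 * X 1) (1 + X 0) ![0,0] (by simp)
    (by simpa only [map_mul, map_add, map_one, ← u1_def, ← u2_def] using h)
lemma n34 : u3 ≠ u4 := by
  intro h
  rw [u3, u4, div_eq_div_iff xne (mul_ne_zero xne yne)] at h
  exact lift_ne ((1 + X 1) * (X 0 * X 1)) ((1 + X 0 + X 1) * X 0) ![1,1]
    (by simp; try norm_num)
    (by simpa only [map_mul, map_add, map_one, ← u1_def, ← u2_def] using h)
lemma n35 : u3 ≠ u5 := by
  intro h
  rw [u3, u5, div_eq_div_iff xne yne] at h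
  exact lift_ne ((1 + X 1) * X 1) ((1 + X 0) * X 0) ![1,0] (by simp; try norm_num)
    (by simpa only [map_mul, map_add, map_one, ← u1_def, ← u2_def] using h)
lemma n45 : u4 ≠ u5 := by
  intro h
  rw [u4, u5, div_eq_div_iff (mul_ne_zero xne yne) yne] at h
  exact lift_ne ((1 + X 0 + X 1) * X 1) ((1 + X 0) * (X 0 * X 1)) ![1,1]
    (by simp; try norm_num)
    (by simpa only [map_mul, map_add, map_one, ← u1_def, ← u2_def] using h)

lemma mutate01 (β : Fin 2 → K2) : mutate 0 (1, β) =
    (-1, fun k => if k = 0 then (1 + β 1) / β 0 else β k) := by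
  simp [mutate]
lemma mutate0n (β : Fin 2 → K2) : mutate 0 (-1, β) =
    (1, fun k => if k = 0 then (1 + β 1) / β 0 else β k) := by
  simp [mutate, add_comm]
lemma mutate11 (β : Fin 2 → K2) : mutate 1 (1, β) =
    (-1, fun k => if k = 1 then (1 + β 0) / β 1 else β k) := by
  simp [mutate, add_comm]
lemma mutate1n (β : Fin 2 → K2) : mutate 1 (-1, β) =
    (1, fun k => if k = 1 then (1 + β 0) / β 1 else β k) := by
  simp [mutate]

lemma ext2 {f g : Fin 2 → K2} (h0 : f 0 = g 0) (h1 : f 1 = g 1) : f = g := by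
  funext k; fin_cases k <;> assumption

lemma m1_one (a c : K2) : mutate 0 ((1:ℤ), ![a,c]) = (-1, ![(1+c)/a, c]) := by
  rw [mutate01]; exact Prod.ext rfl (ext2 (by simp) (by simp))
lemma m1_neg (a c : K2) : mutate 0 ((-1:ℤ), ![a,c]) = (1, ![(1+c)/a, c]) := by
  rw [mutate0n]; exact Prod.ext rfl (ext2 (by simp) (by simp))
lemma m2_one (a c : K2) : mutate 1 ((1:ℤ), ![a,c]) = (-1, ![a, (1+a)/c]) := by
  rw [mutate11]; exact Prod.ext rfl (ext2 (by simp) (by simp))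
lemma m2_neg (a c : K2) : mutate 1 ((-1:ℤ), ![a,c]) = (1, ![a, (1+a)/c]) := by
  rw [mutate1n]; exact Prod.ext rfl (ext2 (by simp) (by simp))
lemma sw_one (a c : K2) : swapSeed ((1:ℤ), ![a,c]) = (-1, ![c, a]) := by
  unfold swapSeed; exact Prod.ext rfl (ext2 (by simp) (by simp))
lemma sw_neg (a c : K2) : swapSeed ((-1:ℤ), ![a,c]) = (1, ![c, a]) := by
  unfold swapSeed; exact Prod.ext rfl (ext2 (by simp) (by simp))


lemma ne_b {β γ : Fin 2 → K2} : (((1:ℤ), β) : Seed2) ≠ ((-1:ℤ), γ) :=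
  fun h => absurd (congrArg Prod.fst h) (by norm_num)
lemma ne_b' {β γ : Fin 2 → K2} : (((-1:ℤ), β) : Seed2) ≠ ((1:ℤ), γ) :=
  fun h => absurd (congrArg Prod.fst h) (by norm_num)
lemma ne_v {b : ℤ} {a c a' c' : K2} (h : a ≠ a') : ((b, ![a,c]) : Seed2) ≠ (b, ![a',c']) :=
  fun e => h (by simpa using congrFun (congrArg Prod.snd e) 0)

def s0 : Seed2 := ((1:ℤ), ![u1, u2])
def s1 : Seed2 := ((-1:ℤ), ![u3, u2])
def s2 : Seed2 := ((1:ℤ), ![u3, u4])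
def s3 : Seed2 := ((-1:ℤ), ![u5, u4])
def s4 : Seed2 := ((1:ℤ), ![u5, u1])
def s5 : Seed2 := ((-1:ℤ), ![u2, u1])
def s6 : Seed2 := ((1:ℤ), ![u2, u3])
def s7 : Seed2 := ((-1:ℤ), ![u4, u3])
def s8 : Seed2 := ((1:ℤ), ![u4, u5])
def s9 : Seed2 := ((-1:ℤ), ![u1, u5])
lemma t0m1 : applyMove s0 Move.m1 = s1 := by
  show mutate 0 s0 = s1
  rw [s0, s1, m1_one, u3]
lemma t0m2 : applyMove s0 Move.m2 = s9 := by
  show mutate 1 s0 = s9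
  rw [s0, s9, m2_one, u5]
lemma t0sw : applyMove s0 Move.swap = s5 := by
  show swapSeed s0 = s5
  rw [s0, s5, sw_one]
lemma t1m1 : applyMove s1 Move.m1 = s0 := by
  show mutate 0 s1 = s0
  rw [s1, s0, m1_neg, idE]
lemma t1m2 : applyMove s1 Move.m2 = s2 := by
  show mutate 1 s1 = s2
  rw [s1, s2, m2_neg, idA]
lemma t1sw : applyMove s1 Move.swap = s6 := by
  show swapSeed s1 = s6
  rw [s1, s6, sw_neg]
lemma t2m1 : applyMove s2 Move.m1 = s3 := by
  show mutate 0 s2 = s3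
  rw [s2, s3, m1_one, idB]
lemma t2m2 : applyMove s2 Move.m2 = s1 := by
  show mutate 1 s2 = s1
  rw [s2, s1, m2_one, idF]
lemma t2sw : applyMove s2 Move.swap = s7 := by
  show swapSeed s2 = s7
  rw [s2, s7, sw_one]
lemma t3m1 : applyMove s3 Move.m1 = s2 := by
  show mutate 0 s3 = s2
  rw [s3, s2, m1_neg, idG]
lemma t3m2 : applyMove s3 Move.m2 = s4 := by
  show mutate 1 s3 = s4
  rw [s3, s4, m2_neg, idC]
lemma t3sw : applyMove s3 Move.swap = s8 := by
  show swapSeed s3 = s8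
  rw [s3, s8, sw_neg]
lemma t4m1 : applyMove s4 Move.m1 = s5 := by
  show mutate 0 s4 = s5
  rw [s4, s5, m1_one, idD]
lemma t4m2 : applyMove s4 Move.m2 = s3 := by
  show mutate 1 s4 = s3
  rw [s4, s3, m2_one, idH]
lemma t4sw : applyMove s4 Move.swap = s9 := by
  show swapSeed s4 = s9
  rw [s4, s9, sw_one]
lemma t5m1 : applyMove s5 Move.m1 = s4 := by
  show mutate 0 s5 = s4
  rw [s5, s4, m1_neg, u5]
lemma t5m2 : applyMove s5 Move.m2 = s6 := by
  show mutate 1 s5 = s6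
  rw [s5, s6, m2_neg, u3]
lemma t5sw : applyMove s5 Move.swap = s0 := by
  show swapSeed s5 = s0
  rw [s5, s0, sw_neg]
lemma t6m1 : applyMove s6 Move.m1 = s7 := by
  show mutate 0 s6 = s7
  rw [s6, s7, m1_one, idA]
lemma t6m2 : applyMove s6 Move.m2 = s5 := by
  show mutate 1 s6 = s5
  rw [s6, s5, m2_one, idE]
lemma t6sw : applyMove s6 Move.swap = s1 := by
  show swapSeed s6 = s1
  rw [s6, s1, sw_one]
lemma t7m1 : applyMove s7 Move.m1 = s6 := by
  show mutate 0 s7 = s6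
  rw [s7, s6, m1_neg, idF]
lemma t7m2 : applyMove s7 Move.m2 = s8 := by
  show mutate 1 s7 = s8
  rw [s7, s8, m2_neg, idB]
lemma t7sw : applyMove s7 Move.swap = s2 := by
  show swapSeed s7 = s2
  rw [s7, s2, sw_neg]
lemma t8m1 : applyMove s8 Move.m1 = s9 := by
  show mutate 0 s8 = s9
  rw [s8, s9, m1_one, idC]
lemma t8m2 : applyMove s8 Move.m2 = s7 := by
  show mutate 1 s8 = s7
  rw [s8, s7, m2_one, idG]
lemma t8sw : applyMove s8 Move.swap = s3 := by
  show swapSeed s8 = s3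
  rw [s8, s3, sw_one]
lemma t9m1 : applyMove s9 Move.m1 = s8 := by
  show mutate 0 s9 = s8
  rw [s9, s8, m1_neg, idH]
lemma t9m2 : applyMove s9 Move.m2 = s0 := by
  show mutate 1 s9 = s0
  rw [s9, s0, m2_neg, idD]
lemma t9sw : applyMove s9 Move.swap = s4 := by
  show swapSeed s9 = s4
  rw [s9, s4, sw_neg]
lemma q01 : s0 ≠ s1 := by rw [s0, s1]; exact ne_b
lemma q02 : s0 ≠ s2 := by rw [s0, s2]; exact ne_v (n13)
lemma q03 : s0 ≠ s3 := by rw [s0, s3]; exact ne_b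
lemma q04 : s0 ≠ s4 := by rw [s0, s4]; exact ne_v (n15)
lemma q05 : s0 ≠ s5 := by rw [s0, s5]; exact ne_b
lemma q06 : s0 ≠ s6 := by rw [s0, s6]; exact ne_v (n12)
lemma q07 : s0 ≠ s7 := by rw [s0, s7]; exact ne_b
lemma q08 : s0 ≠ s8 := by rw [s0, s8]; exact ne_v (n14)
lemma q09 : s0 ≠ s9 := by rw [s0, s9]; exact ne_b
lemma q12 : s1 ≠ s2 := by rw [s1, s2]; exact ne_b'
lemma q13 : s1 ≠ s3 := by rw [s1, s3]; exact ne_v (n35)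
lemma q14 : s1 ≠ s4 := by rw [s1, s4]; exact ne_b'
lemma q15 : s1 ≠ s5 := by rw [s1, s5]; exact ne_v ((n23).symm)
lemma q16 : s1 ≠ s6 := by rw [s1, s6]; exact ne_b'
lemma q17 : s1 ≠ s7 := by rw [s1, s7]; exact ne_v (n34)
lemma q18 : s1 ≠ s8 := by rw [s1, s8]; exact ne_b'
lemma q19 : s1 ≠ s9 := by rw [s1, s9]; exact ne_v ((n13).symm)
lemma q23 : s2 ≠ s3 := by rw [s2, s3]; exact ne_b
lemma q24 : s2 ≠ s4 := by rw [s2, s4]; exact ne_v (n35)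
lemma q25 : s2 ≠ s5 := by rw [s2, s5]; exact ne_b
lemma q26 : s2 ≠ s6 := by rw [s2, s6]; exact ne_v ((n23).symm)
lemma q27 : s2 ≠ s7 := by rw [s2, s7]; exact ne_b
lemma q28 : s2 ≠ s8 := by rw [s2, s8]; exact ne_v (n34)
lemma q29 : s2 ≠ s9 := by rw [s2, s9]; exact ne_b
lemma q34 : s3 ≠ s4 := by rw [s3, s4]; exact ne_b'
lemma q35 : s3 ≠ s5 := by rw [s3, s5]; exact ne_v ((n25).symm)
lemma q36 : s3 ≠ s6 := by rw [s3, s6]; exact ne_b'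
lemma q37 : s3 ≠ s7 := by rw [s3, s7]; exact ne_v ((n45).symm)
lemma q38 : s3 ≠ s8 := by rw [s3, s8]; exact ne_b'
lemma q39 : s3 ≠ s9 := by rw [s3, s9]; exact ne_v ((n15).symm)
lemma q45 : s4 ≠ s5 := by rw [s4, s5]; exact ne_b
lemma q46 : s4 ≠ s6 := by rw [s4, s6]; exact ne_v ((n25).symm)
lemma q47 : s4 ≠ s7 := by rw [s4, s7]; exact ne_b
lemma q48 : s4 ≠ s8 := by rw [s4, s8]; exact ne_v ((n45).symm)
lemma q49 : s4 ≠ s9 := by rw [s4, s9]; exact ne_b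
lemma q56 : s5 ≠ s6 := by rw [s5, s6]; exact ne_b'
lemma q57 : s5 ≠ s7 := by rw [s5, s7]; exact ne_v (n24)
lemma q58 : s5 ≠ s8 := by rw [s5, s8]; exact ne_b'
lemma q59 : s5 ≠ s9 := by rw [s5, s9]; exact ne_v ((n12).symm)
lemma q67 : s6 ≠ s7 := by rw [s6, s7]; exact ne_b
lemma q68 : s6 ≠ s8 := by rw [s6, s8]; exact ne_v (n24)
lemma q69 : s6 ≠ s9 := by rw [s6, s9]; exact ne_b
lemma q78 : s7 ≠ s8 := by rw [s7, s8]; exact ne_b'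
lemma q79 : s7 ≠ s9 := by rw [s7, s9]; exact ne_v ((n14).symm)
lemma q89 : s8 ≠ s9 := by rw [s8, s9]; exact ne_b

def SS : Set Seed2 := {s0, s1, s2, s3, s4, s5, s6, s7, s8, s9}

lemma mem_SS {t : Seed2} :
    t ∈ SS ↔ t = s0 ∨ t = s1 ∨ t = s2 ∨ t = s3 ∨ t = s4 ∨ t = s5 ∨ t = s6 ∨ t = s7 ∨ t = s8 ∨ t = s9 := by
  simp [SS, Set.mem_insert_iff]

lemma closed : ∀ t ∈ SS, ∀ m : Move, applyMove t m ∈ SS := by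
  intro t ht m
  rw [mem_SS] at ht
  rcases ht with rfl|rfl|rfl|rfl|rfl|rfl|rfl|rfl|rfl|rfl <;> cases m <;>
    simp only [t0m1, t0m2, t0sw, t1m1, t1m2, t1sw, t2m1, t2m2, t2sw, t3m1, t3m2, t3sw, t4m1, t4m2, t4sw, t5m1, t5m2, t5sw, t6m1, t6m2, t6sw, t7m1, t7m2, t7sw, t8m1, t8m2, t8sw, t9m1, t9m2, t9sw] <;> rw [mem_SS] <;> tauto

lemma init_eq_s0 : initialSeed = s0 := by
  rw [initialSeed, s0]; exact Prod.ext rfl (ext2 rfl rfl)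

lemma word_closed (w : List Move) : ∀ s, s ∈ SS → applyWord s w ∈ SS := by
  induction w with
  | nil => intro s hs; simpa [applyWord] using hs
  | cons m w ih =>
      intro s hs
      have : applyWord s (m :: w) = applyWord (applyMove s m) w := by
        simp [applyWord]
      rw [this]
      exact ih _ (closed s hs m)

lemma orbit_eq : orbitA2 = SS := by
  apply Set.Subset.antisymm
  · rintro t ⟨w, rfl⟩
    exact word_closed w _ (by rw [mem_SS]; exact Or.inl init_eq_s0)
  · intro t ht
    rw [mem_SS] at ht
    rcases ht with rfl|rfl|rfl|rfl|rfl|rfl|rfl|rfl|rfl|rfl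
    · exact ⟨[], by simp only [applyWord, List.foldl_nil, init_eq_s0]⟩
    · exact ⟨[Move.m1], by simp only [applyWord, List.foldl_cons, List.foldl_nil, init_eq_s0, t0m1, t0m2, t0sw, t1m1, t1m2, t1sw, t2m1, t2m2, t2sw, t3m1, t3m2, t3sw, t4m1, t4m2, t4sw, t5m1, t5m2, t5sw, t6m1, t6m2, t6sw, t7m1, t7m2, t7sw, t8m1, t8m2, t8sw, t9m1, t9m2, t9sw]⟩
    · exact ⟨[Move.m1, Move.m2], by simp only [applyWord, List.foldl_cons, List.foldl_nil, init_eq_s0, t0m1, t0m2, t0sw, t1m1, t1m2, t1sw, t2m1, t2m2, t2sw, t3m1, t3m2, t3sw, t4m1, t4m2, t4sw, t5m1, t5m2, t5sw, t6m1, t6m2, t6sw, t7m1, t7m2, t7sw, t8m1, t8m2, t8sw, t9m1, t9m2, t9sw]⟩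
    · exact ⟨[Move.m1, Move.m2, Move.m1], by simp only [applyWord, List.foldl_cons, List.foldl_nil, init_eq_s0, t0m1, t0m2, t0sw, t1m1, t1m2, t1sw, t2m1, t2m2, t2sw, t3m1, t3m2, t3sw, t4m1, t4m2, t4sw, t5m1, t5m2, t5sw, t6m1, t6m2, t6sw, t7m1, t7m2, t7sw, t8m1, t8m2, t8sw, t9m1, t9m2, t9sw]⟩
    · exact ⟨[Move.m1, Move.m2, Move.m1, Move.m2], by simp only [applyWord, List.foldl_cons, List.foldl_nil, init_eq_s0, t0m1, t0m2, t0sw, t1m1, t1m2, t1sw, t2m1, t2m2, t2sw, t3m1, t3m2, t3sw, t4m1, t4m2, t4sw, t5m1, t5m2, t5sw, t6m1, t6m2, t6sw, t7m1, t7m2, t7sw, t8m1, t8m2, t8sw, t9m1, t9m2, t9sw]⟩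
    · exact ⟨[Move.m1, Move.m2, Move.m1, Move.m2, Move.m1], by simp only [applyWord, List.foldl_cons, List.foldl_nil, init_eq_s0, t0m1, t0m2, t0sw, t1m1, t1m2, t1sw, t2m1, t2m2, t2sw, t3m1, t3m2, t3sw, t4m1, t4m2, t4sw, t5m1, t5m2, t5sw, t6m1, t6m2, t6sw, t7m1, t7m2, t7sw, t8m1, t8m2, t8sw, t9m1, t9m2, t9sw]⟩
    · exact ⟨[Move.m1, Move.m2, Move.m1, Move.m2, Move.m1, Move.m2], by simp only [applyWord, List.foldl_cons, List.foldl_nil, init_eq_s0, t0m1, t0m2, t0sw, t1m1, t1m2, t1sw, t2m1, t2m2, t2sw, t3m1, t3m2, t3sw, t4m1, t4m2, t4sw, t5m1, t5m2, t5sw, t6m1, t6m2, t6sw, t7m1, t7m2, t7sw, t8m1, t8m2, t8sw, t9m1, t9m2, t9sw]⟩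
    · exact ⟨[Move.m1, Move.m2, Move.m1, Move.m2, Move.m1, Move.m2, Move.m1], by simp only [applyWord, List.foldl_cons, List.foldl_nil, init_eq_s0, t0m1, t0m2, t0sw, t1m1, t1m2, t1sw, t2m1, t2m2, t2sw, t3m1, t3m2, t3sw, t4m1, t4m2, t4sw, t5m1, t5m2, t5sw, t6m1, t6m2, t6sw, t7m1, t7m2, t7sw, t8m1, t8m2, t8sw, t9m1, t9m2, t9sw]⟩
    · exact ⟨[Move.m1, Move.m2, Move.m1, Move.m2, Move.m1, Move.m2, Move.m1, Move.m2], by simp only [applyWord, List.foldl_cons, List.foldl_nil, init_eq_s0, t0m1, t0m2, t0sw, t1m1, t1m2, t1sw, t2m1, t2m2, t2sw, t3m1, t3m2, t3sw, t4m1, t4m2, t4sw, t5m1, t5m2, t5sw, t6m1, t6m2, t6sw, t7m1, t7m2, t7sw, t8m1, t8m2, t8sw, t9m1, t9m2, t9sw]⟩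
    · exact ⟨[Move.m1, Move.m2, Move.m1, Move.m2, Move.m1, Move.m2, Move.m1, Move.m2, Move.m1], by simp only [applyWord, List.foldl_cons, List.foldl_nil, init_eq_s0, t0m1, t0m2, t0sw, t1m1, t1m2, t1sw, t2m1, t2m2, t2sw, t3m1, t3m2, t3sw, t4m1, t4m2, t4sw, t5m1, t5m2, t5sw, t6m1, t6m2, t6sw, t7m1, t7m2, t7sw, t8m1, t8m2, t8sw, t9m1, t9m2, t9sw]⟩

lemma card_SS : SS.ncard = 10 := by
  rw [SS]
  rw [Set.ncard_insert_of_notMem (by simp only [Set.mem_insert_iff, Set.mem_singleton_iff]; push_neg; exact ⟨q01, q02, q03, q04, q05, q06, q07, q08, q09⟩) (Set.toFinite _)]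
  rw [Set.ncard_insert_of_notMem (by simp only [Set.mem_insert_iff, Set.mem_singleton_iff]; push_neg; exact ⟨q12, q13, q14, q15, q16, q17, q18, q19⟩) (Set.toFinite _)]
  rw [Set.ncard_insert_of_notMem (by simp only [Set.mem_insert_iff, Set.mem_singleton_iff]; push_neg; exact ⟨q23, q24, q25, q26, q27, q28, q29⟩) (Set.toFinite _)]
  rw [Set.ncard_insert_of_notMem (by simp only [Set.mem_insert_iff, Set.mem_singleton_iff]; push_neg; exact ⟨q34, q35, q36, q37, q38, q39⟩) (Set.toFinite _)]
  rw [Set.ncard_insert_of_notMem (by simp only [Set.mem_insert_iff, Set.mem_singleton_iff]; push_neg; exact ⟨q45, q46, q47, q48, q49⟩) (Set.toFinite _)]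
  rw [Set.ncard_insert_of_notMem (by simp only [Set.mem_insert_iff, Set.mem_singleton_iff]; push_neg; exact ⟨q56, q57, q58, q59⟩) (Set.toFinite _)]
  rw [Set.ncard_insert_of_notMem (by simp only [Set.mem_insert_iff, Set.mem_singleton_iff]; push_neg; exact ⟨q67, q68, q69⟩) (Set.toFinite _)]
  rw [Set.ncard_insert_of_notMem (by simp only [Set.mem_insert_iff, Set.mem_singleton_iff]; push_neg; exact ⟨q78, q79⟩) (Set.toFinite _)]
  rw [Set.ncard_insert_of_notMem (by simp only [Set.mem_singleton_iff]; exact q89) (Set.toFinite _)]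
  rw [Set.ncard_singleton]

/-- In type `A₂`: the `M₂`-orbit of the initial labelled seed has exactly 10
elements; `(μ₁μ₂)⁵` fixes every labelled seed in the orbit; and the
transposition `(1 2)` acts on the orbit as `μ₁μ₂μ₁μ₂μ₁`. -/
theorem a2_orbit :
    orbitA2.ncard = 10 ∧
    (∀ t ∈ orbitA2,
      applyWord t [Move.m1, Move.m2, Move.m1, Move.m2, Move.m1,
        Move.m2, Move.m1, Move.m2, Move.m1, Move.m2] = t) ∧
    (∀ t ∈ orbitA2,
      applyWord t [Move.swap] =
        applyWord t [Move.m1, Move.m2, Move.m1, Move.m2, Move.m1]) := by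
  refine ⟨by rw [orbit_eq]; exact card_SS, ?_, ?_⟩
  · intro t ht
    rw [orbit_eq, mem_SS] at ht
    rcases ht with rfl|rfl|rfl|rfl|rfl|rfl|rfl|rfl|rfl|rfl <;>
      simp only [applyWord, List.foldl_cons, List.foldl_nil, t0m1, t0m2, t0sw, t1m1, t1m2, t1sw, t2m1, t2m2, t2sw, t3m1, t3m2, t3sw, t4m1, t4m2, t4sw, t5m1, t5m2, t5sw, t6m1, t6m2, t6sw, t7m1, t7m2, t7sw, t8m1, t8m2, t8sw, t9m1, t9m2, t9sw]
  · intro t ht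
    rw [orbit_eq, mem_SS] at ht
    rcases ht with rfl|rfl|rfl|rfl|rfl|rfl|rfl|rfl|rfl|rfl <;>
      simp only [applyWord, List.foldl_cons, List.foldl_nil, t0m1, t0m2, t0sw, t1m1, t1m2, t1sw, t2m1, t2m2, t2sw, t3m1, t3m2, t3sw, t4m1, t4m2, t4sw, t5m1, t5m2, t5sw, t6m1, t6m2, t6sw, t7m1, t7m2, t7sw, t8m1, t8m2, t8sw, t9m1, t9m2, t9sw]

end
end
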